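/- If U is a nonprincipal ultrafilter on ℕ that is a pseudo-P_κ point for some cardinal κ > 𝔟, then the cofinality of the ultrapower U-prod ω equals the bounding number 𝔟. -/
import Mathlib


open Cardinal Set Filter

/-- A nonprincipal ultrafilter on ℕ: one that is not of the form `pure n`. -/
def Nonprincipal (U : Ultrafilter ℕ) : Prop := ∀ n : ℕ, U ≠ pure n

/-- `C` is cofinal in the ultrapower `U-prod ω` with respect to `≤_U`. -/
def UCofinal (U : Ultrafilter ℕ) (C : Set (ℕ → ℕ)) : Prop :=
  ∀ f : ℕ → ℕ, ∃ g ∈ C, {n : ℕ | f n ≤ g n} ∈ U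

/-- The cofinality of the ultrapower `U-prod ω`: the least cardinality of a
set of functions cofinal with respect to `≤_U`. -/
noncomputable def cfUProd (U : Ultrafilter ℕ) : Cardinal :=
  sInf {c : Cardinal | ∃ C : Set (ℕ → ℕ), UCofinal U C ∧ c = #C}

/-- The bounding number 𝔟. -/
noncomputable def boundingNumber : Cardinal :=
  sInf {c : Cardinal | ∃ B : Set (ℕ → ℕ),
    (∀ f : ℕ → ℕ, ∃ g ∈ B, {n : ℕ | f n ≤ g n}.Infinite) ∧ c = #B}

/-- The dominating number 𝔡. -/
noncomputable def dominatingNumber : Cardinal :=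
  sInf {c : Cardinal | ∃ D : Set (ℕ → ℕ),
    (∀ f : ℕ → ℕ, ∃ g ∈ D, {n : ℕ | ¬ f n ≤ g n}.Finite) ∧ c = #D}

/-- The splitting number 𝔰. -/
noncomputable def splittingNumber : Cardinal :=
  sInf {c : Cardinal | ∃ S : Set (Set ℕ),
    (∀ X : Set ℕ, X.Infinite → ∃ Y ∈ S, (X ∩ Y).Infinite ∧ (X \ Y).Infinite) ∧ c = #S}

/-- A family of infinite subsets of ℕ is groupwise dense if it is closed under
infinite subsets and finite modifications and, for every partition of ℕ into
consecutive finite intervals (given by a strictly increasing sequence starting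
at 0), the union of some infinitely many of the intervals is in the family. -/
def GroupwiseDense (G : Set (Set ℕ)) : Prop :=
  (∀ X ∈ G, X.Infinite) ∧
  (∀ X ∈ G, ∀ Y : Set ℕ, Y ⊆ X → Y.Infinite → Y ∈ G) ∧
  (∀ X ∈ G, ∀ Y : Set ℕ, (symmDiff X Y).Finite → Y ∈ G) ∧
  (∀ a : ℕ → ℕ, a 0 = 0 → StrictMono a →
    ∃ K : Set ℕ, K.Infinite ∧ (⋃ k ∈ K, Set.Ico (a k) (a (k + 1))) ∈ G)

/-- The groupwise density number 𝔤. -/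
noncomputable def groupwiseDensityNumber : Cardinal :=
  sInf {c : Cardinal | ∃ 𝒢 : Set (Set (Set ℕ)),
    (∀ G ∈ 𝒢, GroupwiseDense G) ∧ ⋂₀ 𝒢 = ∅ ∧ c = #𝒢}

/-- `U` is a pseudo-P_κ point. -/
def PseudoPPoint (U : Ultrafilter ℕ) (κ : Cardinal) : Prop :=
  ∀ F : Set (Set ℕ), (∀ A ∈ F, A ∈ U) → #F < κ →
    ∃ A : Set ℕ, A.Infinite ∧ ∀ B ∈ F, (A \ B).Finite

/-- A finite-to-one function on ℕ. -/
def FinToOne (f : ℕ → ℕ) : Prop := ∀ n : ℕ, (f ⁻¹' {n}).Finite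

/-- Two ultrafilters are nearly coherent if they have a common image under
finite-to-one maps. -/
def NearlyCoherent (U U' : Ultrafilter ℕ) : Prop :=
  ∃ f f' : ℕ → ℕ, FinToOne f ∧ FinToOne f' ∧
    Ultrafilter.map f U = Ultrafilter.map f' U'

/-- `nuX X n` is the least element of `X` greater than `n`. -/
noncomputable def nuX (X : Set ℕ) (n : ℕ) : ℕ := sInf {m : ℕ | m ∈ X ∧ n < m}


noncomputable def maj (f : ℕ → ℕ) (n : ℕ) : ℕ := (Finset.range (n+1)).sup f

lemma le_maj (f : ℕ → ℕ) (n : ℕ) : f n ≤ maj f n :=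
  Finset.le_sup (Finset.self_mem_range_succ n)

lemma maj_mono (f : ℕ → ℕ) : Monotone (maj f) := fun a b h =>
  Finset.sup_mono (Finset.range_subset_range.2 (by omega))

lemma nuX_spec {A : Set ℕ} (hA : A.Infinite) (n : ℕ) : nuX A n ∈ A ∧ n < nuX A n := by
  have hne : {m : ℕ | m ∈ A ∧ n < m}.Nonempty := by
    obtain ⟨m, hm, hlt⟩ := hA.exists_gt n
    exact ⟨m, hm, hlt⟩
  exact Nat.sInf_mem hne

lemma infinite_of_mem (U : Ultrafilter ℕ) (hU : Nonprincipal U) {S : Set ℕ}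
    (hS : S ∈ U) : S.Infinite := by
  by_contra hfin
  rw [Set.not_infinite] at hfin
  obtain ⟨a, _, ha⟩ := Ultrafilter.eq_pure_of_finite_mem hfin hS
  exact hU a ha

/-- If U is a pseudo-P_κ point for some κ > 𝔟, then cf(U-prod ω) = 𝔟. -/
theorem stmt_2 (U : Ultrafilter ℕ) (hU : Nonprincipal U) (κ : Cardinal)
    (hκ : boundingNumber < κ) (hP : PseudoPPoint U κ) :
    cfUProd U = boundingNumber := by
  have hbne : {c : Cardinal | ∃ B : Set (ℕ → ℕ),
      (∀ f : ℕ → ℕ, ∃ g ∈ B, {n : ℕ | f n ≤ g n}.Infinite) ∧ c = #B}.Nonempty := by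
    refine ⟨#(Set.univ : Set (ℕ → ℕ)), Set.univ, fun f => ⟨f, trivial, ?_⟩, rfl⟩
    have : {n : ℕ | f n ≤ f n} = Set.univ := by ext n; simp
    rw [this]; exact Set.infinite_univ
  -- lower bound
  have hlow : boundingNumber ≤ cfUProd U := by
    apply le_csInf
    · refine ⟨#(Set.univ : Set (ℕ → ℕ)), Set.univ, fun f => ⟨f, trivial, ?_⟩, rfl⟩
      exact Filter.univ_mem' fun n => (le_rfl : f n ≤ f n)
    · rintro c ⟨C, hC, rfl⟩
      apply csInf_le'
      exact ⟨C, fun f => by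
        obtain ⟨g, hg, hmem⟩ := hC f
        exact ⟨g, hg, infinite_of_mem U hU hmem⟩, rfl⟩
  -- get a minimal unbounded family B
  obtain ⟨B, hBunb, hBcard⟩ := csInf_mem hbne
  -- upper bound
  have hcof : UCofinal U (maj '' B) := by
    intro f
    by_contra hcon
    push_neg at hcon
    set F : Set (Set ℕ) := (fun g => {n | maj g n < maj f n}) '' B with hF
    have hFU : ∀ X ∈ F, X ∈ U := by
      rintro X ⟨g, hg, rfl⟩
      have h1 : {n | f n ≤ maj g n} ∉ U := hcon (maj g) ⟨g, hg, rfl⟩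
      have h2 : {n | maj f n ≤ maj g n} ∉ U := by
        intro hmem
        exact h1 (Filter.mem_of_superset hmem fun n hn =>
          le_trans (le_maj f n) hn)
      have h3 : {n | maj f n ≤ maj g n}ᶜ ∈ U :=
        (Ultrafilter.compl_mem_iff_notMem).2 h2
      convert h3 using 1
      ext n; simp [not_le]
    have hFcard : #F < κ := lt_of_le_of_lt
      (le_trans Cardinal.mk_image_le (le_of_eq hBcard.symm)) hκ
    obtain ⟨A, hAinf, hAalm⟩ := hP F hFU hFcard
    set h : ℕ → ℕ := fun n => maj f (nuX A n) with hh
    have hdom : ∀ g ∈ B, ∃ N : ℕ, ∀ n ≥ N, g n < h n := by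
      intro g hg
      have hfin : (A \ {n | maj g n < maj f n}).Finite :=
        hAalm _ ⟨g, hg, rfl⟩
      obtain ⟨N, hN⟩ := hfin.bddAbove
      refine ⟨N, fun n hn => ?_⟩
      obtain ⟨haA, hna⟩ := nuX_spec hAinf n
      have hXa : nuX A n ∈ {m | maj g m < maj f m} := by
        by_contra hx
        have : nuX A n ≤ N := hN ⟨haA, hx⟩
        omega
      calc g n ≤ maj g n := le_maj g n
        _ ≤ maj g (nuX A n) := maj_mono g (le_of_lt hna)
        _ < maj f (nuX A n) := hXa
    obtain ⟨g, hg, hginf⟩ := hBunb h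
    obtain ⟨N, hN⟩ := hdom g hg
    obtain ⟨n, hn, hnN⟩ := hginf.exists_gt N
    exact absurd (hN n (le_of_lt hnN)) (not_lt.2 hn)
  have hup : cfUProd U ≤ boundingNumber := by
    have h1 : cfUProd U ≤ #(maj '' B) := csInf_le' ⟨maj '' B, hcof, rfl⟩
    calc cfUProd U ≤ #(maj '' B) := h1
      _ ≤ #B := Cardinal.mk_image_le
      _ = boundingNumber := hBcard.symm
  exact le_antisymm hup hlow
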